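/- Let g : (ℝ₊)⁵ → ℝ₊ satisfy: for all Q, P, V, w, C > 0 and all S, U, τ, A > 0, g(S·Q, S⁻¹·U·A⁻¹·P, S·τ⁻¹·V, τ⁻¹·A²·w, U·C) = A · g(Q, P, V, w, C). Fix λ, μ ∈ ℝ with λ ≠ 0, and set x = λ·(3, 2, −1, 1, −2) and y = (−1, −1, 0, 0, 1) + μ·(3, 2, −1, 1, −2). Then there exists a function f : ℝ₊ → ℝ₊ such that for all Q, P, V, w, C > 0, g(Q, P, V, w, C) = Q^{y₁}·P^{y₂}·V^{y₃}·w^{y₄}·C^{y₅} · f(Q^{x₁}·P^{x₂}·V^{x₃}·w^{x₄}·C^{x₅}). -/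

import Mathlib

/-- The general form of the market impact with bet cost `C`: for any fixed nonzero
kernel solution `x = lam • (3, 2, -1, 1, -2)` and any solution
`y = (-1, -1, 0, 0, 1) + mu • (3, 2, -1, 1, -2)` of the inhomogeneous system,
there is `f` with `g = Q^y₁ P^y₂ V^y₃ w^y₄ C^y₅ * f (Q^x₁ P^x₂ V^x₃ w^x₄ C^x₅)`. -/
theorem market_impact_general_bet_cost (g : ℝ → ℝ → ℝ → ℝ → ℝ → ℝ)
    (hg_pos : ∀ Q P V w C : ℝ, 0 < Q → 0 < P → 0 < V → 0 < w → 0 < C →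
      0 < g Q P V w C)
    (hg_inv : ∀ Q P V w C S U τ A : ℝ, 0 < Q → 0 < P → 0 < V → 0 < w → 0 < C →
      0 < S → 0 < U → 0 < τ → 0 < A →
      g (S * Q) (S⁻¹ * U * A⁻¹ * P) (S * τ⁻¹ * V) (τ⁻¹ * A ^ 2 * w) (U * C)
        = A * g Q P V w C)
    (lam mu : ℝ) (hlam : lam ≠ 0) :
    ∃ f : ℝ → ℝ, (∀ z : ℝ, 0 < z → 0 < f z) ∧
      ∀ Q P V w C : ℝ, 0 < Q → 0 < P → 0 < V → 0 < w → 0 < C →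
        g Q P V w C
          = Q ^ (-1 + 3 * mu) * P ^ (-1 + 2 * mu) * V ^ (-mu) * w ^ mu
              * C ^ (1 - 2 * mu)
            * f (Q ^ (3 * lam) * P ^ (2 * lam) * V ^ (-lam) * w ^ lam
                  * C ^ (-(2 * lam))) := by
  refine ⟨fun z => (z ^ lam⁻¹) ^ (-mu) * g 1 1 1 (z ^ lam⁻¹) 1, ?_, ?_⟩
  · intro z hz
    have h1 : (0:ℝ) < z ^ lam⁻¹ := Real.rpow_pos_of_pos hz _
    exact mul_pos (Real.rpow_pos_of_pos h1 _)
      (hg_pos _ _ _ _ _ one_pos one_pos one_pos h1 one_pos)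
  · intro Q P V w C hQ hP hV hw hC
    set M : ℝ := Q ^ (3:ℝ) * P ^ (2:ℝ) * V ^ (-1:ℝ) * w ^ (1:ℝ) * C ^ (-2:ℝ) with hM
    have hMpos : 0 < M := by rw [hM]; positivity
    have hpow : ∀ t : ℝ, M ^ t
        = Q ^ (3*t) * P ^ (2*t) * V ^ (-t) * w ^ t * C ^ (-(2*t)) := by
      intro t
      rw [hM, Real.mul_rpow (by positivity) (by positivity),
        Real.mul_rpow (by positivity) (by positivity),
        Real.mul_rpow (by positivity) (by positivity),
        Real.mul_rpow (by positivity) (by positivity),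
        ← Real.rpow_mul hQ.le, ← Real.rpow_mul hP.le, ← Real.rpow_mul hV.le,
        ← Real.rpow_mul hw.le, ← Real.rpow_mul hC.le]
      ring_nf
    have key := hg_inv Q P V w C Q⁻¹ C⁻¹ (Q⁻¹*V) (Q*P/C) hQ hP hV hw hC
      (by positivity) (by positivity) (by positivity) (by positivity)
    have e1 : Q⁻¹ * Q = 1 := inv_mul_cancel₀ hQ.ne'
    have e2 : (Q⁻¹)⁻¹ * C⁻¹ * (Q*P/C)⁻¹ * P = 1 := by field_simp
    have e3 : Q⁻¹ * (Q⁻¹*V)⁻¹ * V = 1 := by field_simp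
    have e5 : C⁻¹ * C = 1 := inv_mul_cancel₀ hC.ne'
    have e4 : (Q⁻¹*V)⁻¹ * (Q*P/C)^2 * w = M := by
      have h2 : C ^ (-2:ℝ) = (C^2)⁻¹ := by
        rw [show (-2:ℝ) = -((2:ℕ):ℝ) by norm_num, Real.rpow_neg hC.le,
          Real.rpow_natCast]
      have h3 : Q ^ (3:ℝ) = Q^3 := by
        rw [show (3:ℝ) = ((3:ℕ):ℝ) by norm_num, Real.rpow_natCast]
      have h4 : P ^ (2:ℝ) = P^2 := by
        rw [show (2:ℝ) = ((2:ℕ):ℝ) by norm_num, Real.rpow_natCast]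
      rw [hM, h2, h3, h4, Real.rpow_neg_one, Real.rpow_one]
      field_simp
      try ring
      try tauto
    rw [e1, e2, e3, e4, e5] at key
    have hg' : g Q P V w C = C / (Q*P) * g 1 1 1 M 1 := by
      rw [key]
      field_simp
    have hZ : Q ^ (3*lam) * P ^ (2*lam) * V ^ (-lam) * w ^ lam * C ^ (-(2*lam))
        = M ^ lam := (hpow lam).symm
    have hZinv : (M ^ lam) ^ lam⁻¹ = M := by
      rw [← Real.rpow_mul hMpos.le, mul_inv_cancel₀ hlam, Real.rpow_one]
    have hpre : Q ^ (-1 + 3*mu) * P ^ (-1 + 2*mu) * V ^ (-mu) * w ^ mu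
        * C ^ (1 - 2*mu) = C / (Q*P) * M ^ mu := by
      rw [hpow mu, Real.rpow_add hQ, Real.rpow_add hP,
        show (1 - 2*mu) = 1 + -(2*mu) by ring, Real.rpow_add hC,
        Real.rpow_neg_one, Real.rpow_neg_one, Real.rpow_one]
      field_simp
    have hmm : M ^ mu * M ^ (-mu) = 1 := by
      rw [← Real.rpow_add hMpos]
      simp
    simp only
    rw [hZ, hZinv, hpre, hg',
      show C/(Q*P) * M^mu * (M^(-mu) * g 1 1 1 M 1)
        = C/(Q*P) * (M^mu * M^(-mu)) * g 1 1 1 M 1 by ring, hmm]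
    ring
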